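/- Let a ∈ (0, ∞), b ∈ (0, ∞], and let t_1, t_2 ≥ 0 and C > 0. If for all positive integers n_1, n_2 and all bilinear forms U : ℓ_2^{n_1} × ℓ_2^{n_2} → 𝕂 one has ( Σ_{i=1}^{n_1} ( Σ_{j=1}^{n_2} |U(e_i, e_j)|^a )^{b/a} )^{1/b} ≤ C n_1^{t_1} n_2^{t_2} ‖U‖ (the outer sum replaced by the supremum over i when b = ∞), then t_2 ≥ 1/a − 1/2. -/

import Mathlib

open scoped ENNReal

/-- The `ℓ_p` "norm" of a finite family of (nonnegative) reals, for `p ∈ (0,∞]`: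
`(Σ_i f_i^p)^{1/p}` for finite `p`, and `sup_i f_i` when `p = ∞`. -/
noncomputable def lpNormFin (p : ℝ≥0∞) {n : ℕ} (f : Fin n → ℝ) : ℝ :=
  if p = ⊤ then ⨆ i, f i else (∑ i, f i ^ p.toReal) ^ (1 / p.toReal)

/-- **Optimality of the exponent `t_2 = 1/a − 1/2`.**
Let `a ∈ (0,∞)`, `b ∈ (0,∞]`, `t_1, t_2 ≥ 0`, `C > 0`.  If
`( Σ_{i=1}^{n_1} ( Σ_{j=1}^{n_2} |U(e_i,e_j)|^a )^{b/a} )^{1/b} ≤ C n_1^{t_1} n_2^{t_2} ‖U‖`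
(outer sum a supremum when `b = ∞`) for all `n_1, n_2` and all bilinear forms
`U : ℓ_2^{n_1} × ℓ_2^{n_2} → 𝕂`, then `t_2 ≥ 1/a − 1/2`. -/
theorem bilinear_optimal_t2 (𝕂 : Type*) [RCLike 𝕂] (a : ℝ) (ha : 0 < a)
    (b : ℝ≥0∞) (hb : 0 < b) (t1 t2 : ℝ) (ht1 : 0 ≤ t1) (ht2 : 0 ≤ t2) (C : ℝ) (hC : 0 < C)
    (h : ∀ n1 n2 : ℕ, 0 < n1 → 0 < n2 →
      ∀ U : EuclideanSpace 𝕂 (Fin n1) →L[𝕂] EuclideanSpace 𝕂 (Fin n2) →L[𝕂] 𝕂,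
        lpNormFin b (fun i : Fin n1 =>
            (∑ j : Fin n2,
              ‖U (EuclideanSpace.single i 1) (EuclideanSpace.single j 1)‖ ^ a) ^ (1 / a))
          ≤ C * (n1 : ℝ) ^ t1 * (n2 : ℝ) ^ t2 * ‖U‖) :
    1 / a - 1 / 2 ≤ t2 := by
  by_contra hlt
  push_neg at hlt
  have ha' : a ≠ 0 := ne_of_gt ha
  set ε : ℝ := 1 / a - 1 / 2 - t2 with hεdef
  have hεpos : 0 < ε := sub_pos.mpr hlt
  obtain ⟨N, hN⟩ := exists_nat_gt (max 1 (C ^ (1 / ε)))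
  have hN1 : (1 : ℝ) < N := lt_of_le_of_lt (le_max_left _ _) hN
  have hNpos : (0 : ℝ) < N := by linarith
  have hNpos' : 0 < N := by exact_mod_cast hNpos
  set c : ℝ := (N : ℝ) ^ (-(1 / 2) : ℝ) with hcdef
  have hcpos : 0 < c := Real.rpow_pos_of_pos hNpos _
  set u : EuclideanSpace 𝕂 (Fin 1) := EuclideanSpace.single 0 1 with hu
  set v : EuclideanSpace 𝕂 (Fin N) := WithLp.toLp 2 (fun _ => (c : 𝕂)) with hv
  have hnu : ‖u‖ = 1 := by simp [hu]
  have hnv : ‖v‖ = 1 := by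
    rw [EuclideanSpace.norm_eq]
    have hvj : ∀ j : Fin N, ‖v j‖ = c := fun j => by
      simp [hv, abs_of_nonneg hcpos.le]
    have hc2 : c ^ 2 = ((N : ℝ))⁻¹ := by
      rw [hcdef, ← Real.rpow_natCast ((N : ℝ) ^ (-(1 / 2) : ℝ)) 2,
        ← Real.rpow_mul hNpos.le]
      norm_num
      exact Real.rpow_neg_one _
    have hsum : ∑ x : Fin N, ‖v x‖ ^ 2 = 1 := by
      rw [Finset.sum_congr rfl fun x _ => by rw [hvj x, hc2], Finset.sum_const,
        Finset.card_univ, Fintype.card_fin, nsmul_eq_mul,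
        mul_inv_cancel₀ (ne_of_gt hNpos)]
    rw [hsum, Real.sqrt_one]
  set U : EuclideanSpace 𝕂 (Fin 1) →L[𝕂] EuclideanSpace 𝕂 (Fin N) →L[𝕂] 𝕂 :=
    (innerSL 𝕂 u).smulRight (innerSL 𝕂 v) with hU
  have hnormU : ‖U‖ = 1 := by
    rw [hU, ContinuousLinearMap.norm_smulRight_apply, innerSL_apply_norm,
      innerSL_apply_norm, hnu, hnv, one_mul]
  have hentry : ∀ (i : Fin 1) (j : Fin N),
      ‖U (EuclideanSpace.single i 1) (EuclideanSpace.single j 1)‖ = c := by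
    intro i j
    have hi : i = 0 := Subsingleton.elim _ _
    subst hi
    have : U (EuclideanSpace.single 0 1) (EuclideanSpace.single j 1)
        = inner 𝕂 u (EuclideanSpace.single 0 1) * inner 𝕂 v (EuclideanSpace.single j 1) := by
      simp [hU, ContinuousLinearMap.smulRight_apply, smul_eq_mul]
    rw [this, EuclideanSpace.inner_single_right, EuclideanSpace.inner_single_right]
    simp [hu, hv, abs_of_nonneg hcpos.le]
  set L : ℝ := (N : ℝ) ^ (1 / a - 1 / 2) with hL
  have hLpos : 0 < L := Real.rpow_pos_of_pos hNpos _
  have hinner : (∑ j : Fin N, c ^ a) ^ (1 / a) = L := by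
    have hca : c ^ a = (N : ℝ) ^ ((-(1 / 2)) * a) := by
      rw [hcdef, ← Real.rpow_mul hNpos.le]
    rw [Finset.sum_const, Finset.card_univ, Fintype.card_fin, nsmul_eq_mul, hca]
    rw [← Real.rpow_one (N : ℝ)]
    nth_rewrite 2 [Real.rpow_one (N : ℝ)]
    rw [← Real.rpow_add hNpos, ← Real.rpow_mul hNpos.le, hL]
    congr 1
    field_simp
    ring
  have key := h 1 N one_pos hNpos' U
  have hf : (fun i : Fin 1 =>
      (∑ j : Fin N, ‖U (EuclideanSpace.single i 1) (EuclideanSpace.single j 1)‖ ^ a)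
        ^ (1 / a)) = fun _ : Fin 1 => L := by
    funext i
    simp only [hentry]
    exact hinner
  rw [hf] at key
  have hlp : lpNormFin b (fun _ : Fin 1 => L) = L := by
    unfold lpNormFin
    by_cases hbt : b = ⊤
    · simp [hbt]
    · have hbr : 0 < b.toReal := ENNReal.toReal_pos (ne_of_gt hb) hbt
      simp only [hbt, if_false]
      rw [Finset.sum_const, Finset.card_univ, Fintype.card_fin, one_nsmul,
        ← Real.rpow_mul hLpos.le, mul_one_div, div_self (ne_of_gt hbr), Real.rpow_one]
  rw [hlp, hnormU, mul_one, Nat.cast_one, Real.one_rpow, mul_one] at key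
  have hLe : L = (N : ℝ) ^ t2 * (N : ℝ) ^ ε := by
    rw [hL, ← Real.rpow_add hNpos]
    congr 1
    simp [hεdef]
  have hNt2pos : 0 < (N : ℝ) ^ t2 := Real.rpow_pos_of_pos hNpos _
  rw [hLe, mul_comm] at key
  have hkey2 : (N : ℝ) ^ ε ≤ C := le_of_mul_le_mul_right key hNt2pos
  have hCeq : C = (C ^ (1 / ε)) ^ ε := by
    rw [← Real.rpow_mul hC.le, one_div, inv_mul_cancel₀ (ne_of_gt hεpos), Real.rpow_one]
  have hCN : C ^ (1 / ε) < N := lt_of_le_of_lt (le_max_right _ _) hN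
  have : C < (N : ℝ) ^ ε := by
    rw [hCeq]
    exact Real.rpow_lt_rpow (Real.rpow_nonneg hC.le _) hCN hεpos
  linarith
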